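/- Let G ≤ GL₂(ℂ) be a finite group whose image in PGL₂(ℂ) is a dihedral group D₂ₙ of odd degree n, and suppose -I₂ ∉ G. Then G ≅ H × Cₘ where H ≅ D₂ₙ is a dihedral group of order 2n and m = |G|/(2n) is odd, with Cₘ embedded as scalar matrices. -/

import Mathlib

open Matrix

noncomputable section

/-- The projection `π : GL₂(ℂ) → PGL₂(ℂ)`, realised as the quotient map by the centre
(the scalar matrices). -/
def projPGL2 : Matrix.GeneralLinearGroup (Fin 2) ℂ →*
    Matrix.GeneralLinearGroup (Fin 2) ℂ ⧸ Subgroup.center (Matrix.GeneralLinearGroup (Fin 2) ℂ) :=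
  QuotientGroup.mk' (Subgroup.center (Matrix.GeneralLinearGroup (Fin 2) ℂ))

private abbrev GL2C := Matrix.GeneralLinearGroup (Fin 2) ℂ

private lemma conj_aux17 {H : Type*} [Group H] {s r c κ : H}
    (hc : ∀ x, c * x = x * c) (hκ : ∀ x, κ * x = x * κ)
    (h : s * (r * (s⁻¹ * (r * (c * c)))) = 1) :
    (s * κ⁻¹) * (r * c) * (s * κ⁻¹)⁻¹ = (r * c)⁻¹ := by
  have hκ' : ∀ x, κ⁻¹ * x = x * κ⁻¹ := fun x =>
    (Commute.inv_left (a := κ) (b := x) (hκ x)).eq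
  apply eq_inv_of_mul_eq_one_left
  calc s * κ⁻¹ * (r * c) * (s * κ⁻¹)⁻¹ * (r * c)
      = s * (κ⁻¹ * (r * c)) * (κ * (s⁻¹ * (r * c))) := by
        rw [_root_.mul_inv_rev, inv_inv]; group
    _ = s * ((r * c) * κ⁻¹) * (κ * (s⁻¹ * (r * c))) := by rw [hκ' (r * c)]
    _ = s * (r * c) * (s⁻¹ * (r * c)) := by group
    _ = s * r * ((c * s⁻¹) * (r * c)) := by group
    _ = s * r * ((s⁻¹ * c) * (r * c)) := by rw [hc s⁻¹]
    _ = s * r * s⁻¹ * ((c * r) * c) := by group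
    _ = s * r * s⁻¹ * ((r * c) * c) := by rw [hc r]
    _ = s * (r * (s⁻¹ * (r * (c * c)))) := by group
    _ = 1 := h

private lemma mem_center_scalar17 {z : GL2C} (hz : z ∈ Subgroup.center GL2C) :
    ∃ c : ℂ, (z : Matrix (Fin 2) (Fin 2) ℂ) = Matrix.scalar (Fin 2) c := by
  have hcomm : ∀ i j : Fin 2, i ≠ j →
      Commute (Matrix.single i j (1:ℂ)) (z : Matrix (Fin 2) (Fin 2) ℂ) := by
    intro i j hij
    set E : Matrix (Fin 2) (Fin 2) ℂ := Matrix.single i j 1 with hE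
    have hE2 : E * E = 0 := by
      rw [hE, Matrix.single_mul_single_of_ne]
      exact hij.symm
    have h1 : ((1 : Matrix (Fin 2) (Fin 2) ℂ) + E) * (1 - E) = 1 := by
      have : ((1 : Matrix (Fin 2) (Fin 2) ℂ) + E) * (1 - E) = 1 - E * E := by noncomm_ring
      rw [this, hE2, sub_zero]
    have h2 : ((1 : Matrix (Fin 2) (Fin 2) ℂ) - E) * (1 + E) = 1 := by
      have : ((1 : Matrix (Fin 2) (Fin 2) ℂ) - E) * (1 + E) = 1 - E * E := by noncomm_ring
      rw [this, hE2, sub_zero]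
    have hu := Subgroup.mem_center_iff.mp hz (Units.mk (1 + E) (1 - E) h1 h2)
    have hu' : ((1 : Matrix (Fin 2) (Fin 2) ℂ) + E) * (z : Matrix (Fin 2) (Fin 2) ℂ)
        = (z : Matrix (Fin 2) (Fin 2) ℂ) * (1 + E) := congrArg Units.val hu
    rw [add_mul, mul_add, one_mul, mul_one] at hu'
    exact add_left_cancel hu'
  obtain ⟨c, hc⟩ := Matrix.mem_range_scalar_of_commute_single hcomm
  exact ⟨c, hc.symm⟩

private lemma center_sq17 {z : GL2C} (hz : z ∈ Subgroup.center GL2C)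
    (h2 : (z : Matrix (Fin 2) (Fin 2) ℂ) * (z : Matrix (Fin 2) (Fin 2) ℂ) = 1) :
    z = 1 ∨ z = -1 := by
  obtain ⟨c, hc⟩ := mem_center_scalar17 hz
  rw [hc, ← _root_.map_mul] at h2
  have hcc : c * c = 1 := by
    have h1 : (Matrix.scalar (Fin 2)) (c * c) = (Matrix.scalar (Fin 2)) 1 := by
      rw [h2, _root_.map_one]
    exact Matrix.scalar_inj.mp h1
  rcases mul_self_eq_one_iff.mp hcc with h | h
  · left
    apply Units.ext
    rw [hc, h, _root_.map_one]
    rfl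
  · right
    apply Units.ext
    rw [hc, h, _root_.map_neg, _root_.map_one]
    rfl

private lemma center_det17 {z : GL2C} (hz : z ∈ Subgroup.center GL2C)
    (hdet : Matrix.det (z : Matrix (Fin 2) (Fin 2) ℂ) = 1) :
    z = 1 ∨ z = -1 := by
  obtain ⟨c, hc⟩ := mem_center_scalar17 hz
  have hcc : c * c = 1 := by
    rw [hc, Matrix.scalar_apply, Matrix.det_diagonal, Fin.prod_univ_two] at hdet
    exact hdet
  apply center_sq17 hz
  rw [hc, ← _root_.map_mul, hcc, _root_.map_one]

set_option maxHeartbeats 1600000 in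
/-- Let `G ≤ GL₂(ℂ)` be a finite group whose image in `PGL₂(ℂ)` is a
dihedral group `D₂ₙ` of odd degree `n ≥ 3`, and suppose `-I₂ ∉ G`.  Then
`G ≅ H × Cₘ`, where `H ≅ D₂ₙ` is a dihedral group of order `2n` and `m = |G|/(2n)` is odd,
with `Cₘ` embedded as the subgroup of scalar matrices of `G` (the intersection of `G` with
the centre of `GL₂(ℂ)`). -/
theorem noncentral_dihedral_extension_structure (n : ℕ) (hn3 : 3 ≤ n) (hnodd : Odd n)
    (G : Subgroup (Matrix.GeneralLinearGroup (Fin 2) ℂ)) [Finite G]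
    (himage : Nonempty (↥(Subgroup.map projPGL2 G) ≃* DihedralGroup n))
    (hneg : (-1 : Matrix.GeneralLinearGroup (Fin 2) ℂ) ∉ G) :
    ∃ m : ℕ, Odd m ∧ 2 * n * m = Nat.card G ∧
      Nonempty (↥G ≃* DihedralGroup n × Multiplicative (ZMod m)) ∧
      Nonempty (↥(G ⊓ Subgroup.center (Matrix.GeneralLinearGroup (Fin 2) ℂ))
        ≃* Multiplicative (ZMod m)) := by
  haveI : NeZero n := ⟨by omega⟩
  obtain ⟨e⟩ := himage
  -- the projection restricted to G
  have hproj1 : ∀ x : GL2C, projPGL2 x = 1 ↔ x ∈ Subgroup.center GL2C := by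
    intro x
    unfold projPGL2
    rw [QuotientGroup.mk'_apply, QuotientGroup.eq_one_iff]
  set q : ↥G →* ↥(Subgroup.map projPGL2 G) :=
    (projPGL2.comp G.subtype).codRestrict _
      (fun g => Subgroup.mem_map_of_mem projPGL2 g.2) with hqdef
  set E : ↥G →* DihedralGroup n := e.toMonoidHom.comp q with hEdef
  have hE1 : ∀ g : ↥G, E g = 1 ↔ ((g : GL2C) ∈ Subgroup.center GL2C) := by
    intro g
    rw [hEdef, MonoidHom.comp_apply]
    rw [show (e.toMonoidHom (q g) = 1) ↔ q g = 1 from e.map_eq_one_iff]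
    rw [← Subtype.coe_inj]
    have h1 : ((q g : _)) = projPGL2 (g : GL2C) := rfl
    rw [h1]
    exact hproj1 _
  have hEsurj : Function.Surjective E := by
    intro d
    obtain ⟨x, hx, hx'⟩ := Subgroup.mem_map.mp (e.symm d).2
    refine ⟨⟨x, hx⟩, ?_⟩
    have h1 : q ⟨x, hx⟩ = e.symm d := Subtype.ext hx'
    rw [hEdef, MonoidHom.comp_apply, h1]
    exact e.apply_symm_apply d
  -- the central subgroup
  haveI hKfin : Finite ↥(G ⊓ Subgroup.center GL2C) :=
    Finite.of_injective (Subgroup.inclusion inf_le_left) (Subgroup.inclusion_injective _)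
  set m := Nat.card ↥(G ⊓ Subgroup.center GL2C) with hmdef
  have hmodd : Odd m := by
    by_contra hcon
    have h2 : 2 ∣ m := by
      rcases Nat.even_or_odd m with he | ho
      · exact he.two_dvd
      · exact absurd ho hcon
    haveI : Fact (Nat.Prime 2) := ⟨Nat.prime_two⟩
    obtain ⟨z, hz⟩ :=
      exists_prime_orderOf_dvd_card' (G := ↥(G ⊓ Subgroup.center GL2C)) 2 h2
    have hz1 : z ≠ 1 := by
      intro h1
      rw [h1, orderOf_one] at hz
      omega
    have hzz : z * z = 1 := by
      have hpow := pow_orderOf_eq_one z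
      rw [hz] at hpow
      rwa [sq] at hpow
    have hzz' : ((z : GL2C)) * ((z : GL2C)) = 1 := by
      have := congrArg Subtype.val hzz
      simpa using this
    have hzz'' : ((z : GL2C) : Matrix (Fin 2) (Fin 2) ℂ)
        * ((z : GL2C) : Matrix (Fin 2) (Fin 2) ℂ) = 1 := by
      have := congrArg Units.val hzz'
      rwa [Units.val_mul, Units.val_one] at this
    rcases center_sq17 (Subgroup.mem_inf.mp z.2).2 hzz'' with h | h
    · exact hz1 (Subtype.ext h)
    · exact hneg (h ▸ (Subgroup.mem_inf.mp z.2).1)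
  have hcop : (Nat.card ↥(G ⊓ Subgroup.center GL2C)).Coprime 2 := by
    rw [Nat.coprime_two_right]
    exact hmodd
  have sqrtK : ∀ ζ : ↥(G ⊓ Subgroup.center GL2C), ∃ c, c ^ 2 = ζ := fun ζ =>
    ⟨(powCoprime hcop).symm ζ, (powCoprime hcop).apply_symm_apply ζ⟩
  have sqinjK : ∀ x : ↥(G ⊓ Subgroup.center GL2C), x ^ 2 = 1 → x = 1 := fun x hx =>
    (powCoprime hcop).injective (a₁ := x) (a₂ := 1)
      (by rw [powCoprime_apply, powCoprime_apply, hx, one_pow])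
  -- helpers inside G
  have hcomm : ∀ z a : ↥G, (z : GL2C) ∈ Subgroup.center GL2C → z * a = a * z := fun z a hz =>
    Subtype.ext ((Subgroup.mem_center_iff.mp hz ↑a).symm)
  have sqrtG : ∀ g : ↥G, (g : GL2C) ∈ Subgroup.center GL2C →
      ∃ c : ↥G, ((c : GL2C) ∈ Subgroup.center GL2C) ∧ c ^ 2 = g := by
    intro g hg
    obtain ⟨c0, hc0⟩ := sqrtK ⟨(g : GL2C), Subgroup.mem_inf.mpr ⟨g.2, hg⟩⟩
    refine ⟨⟨(c0 : GL2C), (Subgroup.mem_inf.mp c0.2).1⟩, (Subgroup.mem_inf.mp c0.2).2, ?_⟩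
    apply Subtype.ext
    have h := congrArg Subtype.val hc0
    simpa using h
  have oneG : ∀ g : ↥G, (g : GL2C) ∈ Subgroup.center GL2C → g ^ 2 = 1 → g = 1 := by
    intro g hg h
    set gK : ↥(G ⊓ Subgroup.center GL2C) := ⟨(g : GL2C), Subgroup.mem_inf.mpr ⟨g.2, hg⟩⟩
      with hgK
    have h2 : gK ^ 2 = 1 := by
      apply Subtype.ext
      have := congrArg Subtype.val h
      simpa [hgK] using this
    have h3 := sqinjK gK h2
    apply Subtype.ext
    have := congrArg Subtype.val h3
    simpa [hgK] using this
  -- pick preimages of the generators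
  obtain ⟨r, hr⟩ := hEsurj (DihedralGroup.r 1)
  obtain ⟨s, hs⟩ := hEsurj (DihedralGroup.sr 0)
  have hsr0inv : (DihedralGroup.sr 0 : DihedralGroup n)⁻¹ = DihedralGroup.sr 0 :=
    inv_eq_of_mul_eq_one_left (DihedralGroup.sr_mul_self 0)
  set w := s * r * s⁻¹ * r with hwdef
  have hwC : (w : GL2C) ∈ Subgroup.center GL2C := by
    apply (hE1 w).mp
    rw [hwdef]
    simp only [_root_.map_mul, _root_.map_inv, hr, hs, hsr0inv, DihedralGroup.sr_mul_r,
      DihedralGroup.sr_mul_sr, DihedralGroup.r_mul_r]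
    rw [DihedralGroup.one_def]
    congr 1
    ring
  have hrnC : ((r ^ n : ↥G) : GL2C) ∈ Subgroup.center GL2C := by
    apply (hE1 _).mp
    rw [map_pow, hr, DihedralGroup.r_one_pow, ZMod.natCast_self, ← DihedralGroup.one_def]
  have hs2C : ((s ^ 2 : ↥G) : GL2C) ∈ Subgroup.center GL2C := by
    apply (hE1 _).mp
    rw [map_pow, hs, sq, DihedralGroup.sr_mul_sr, sub_self, ← DihedralGroup.one_def]
  have h1 : s * r * s⁻¹ = w * r⁻¹ := by rw [hwdef]; group
  have h2 : s * r ^ n * s⁻¹ = (s * r * s⁻¹) ^ n := by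
    have := map_pow (MulAut.conj s) r n
    simp only [MulAut.conj_apply] at this
    rw [this]
  have hcwr : Commute w r⁻¹ := hcomm w r⁻¹ hwC
  have h3 : (w * r⁻¹) ^ n = w ^ n * (r ^ n)⁻¹ := by rw [hcwr.mul_pow, inv_pow]
  have h4 : s * r ^ n * s⁻¹ = r ^ n := by
    have h := hcomm (r ^ n) s hrnC
    calc s * r ^ n * s⁻¹ = r ^ n * s * s⁻¹ := by rw [← h]
      _ = r ^ n := by group
  have h5 : r ^ n = w ^ n * (r ^ n)⁻¹ := by
    conv_lhs => rw [← h4]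
    rw [h2, h1, h3]
  have hkey : r ^ n * r ^ n = w ^ n := by
    have := congrArg (· * r ^ n) h5
    simpa using this
  obtain ⟨c, hcC, hc2⟩ := sqrtG w⁻¹ (inv_mem hwC)
  set r' := r * c with hr'def
  have hCr : Commute r c := (hcomm c r hcC).symm
  have hr'n : r' ^ n = 1 := by
    have hcnC : ((c ^ n : ↥G) : GL2C) ∈ Subgroup.center GL2C := by
      show ((c ^ n : ↥G) : GL2C) ∈ _
      rw [SubmonoidClass.coe_pow]
      exact pow_mem hcC n
    have huC : (((r ^ n * c ^ n) : ↥G) : GL2C) ∈ Subgroup.center GL2C := mul_mem hrnC hcnC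
    have hu2 : (r ^ n * c ^ n) ^ 2 = 1 := by
      calc (r ^ n * c ^ n) ^ 2 = (r ^ n) ^ 2 * (c ^ n) ^ 2 := (hCr.pow_pow n n).mul_pow 2
        _ = (r ^ n * r ^ n) * ((c ^ 2) ^ n) := by rw [sq, pow_right_comm]
        _ = w ^ n * (w⁻¹) ^ n := by rw [hkey, hc2]
        _ = 1 := by rw [inv_pow, mul_inv_cancel]
    have := oneG _ huC hu2
    rw [hr'def, hCr.mul_pow]
    exact this
  obtain ⟨κ, hκC, hκ2⟩ := sqrtG (s ^ 2) hs2C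
  set s' := s * κ⁻¹ with hs'def
  have hs'2 : s' ^ 2 = 1 := by
    have hCs : Commute s κ⁻¹ := (hcomm κ⁻¹ s (inv_mem hκC)).symm
    calc s' ^ 2 = s ^ 2 * (κ⁻¹) ^ 2 := by rw [hs'def, hCs.mul_pow]
      _ = s ^ 2 * (κ ^ 2)⁻¹ := by rw [inv_pow]
      _ = 1 := by rw [hκ2, mul_inv_cancel]
  have hconj : s' * r' * s'⁻¹ = r'⁻¹ := by
    rw [hs'def, hr'def]
    apply conj_aux17 (fun x => hcomm c x hcC) (fun x => hcomm κ x hκC)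
    have hcc : c * c = w⁻¹ := by rw [← sq, hc2]
    rw [hcc, hwdef]
    group
  have hr'E : E r' = DihedralGroup.r 1 := by
    rw [hr'def, _root_.map_mul, hr, (hE1 c).mpr hcC, mul_one]
  have hs'E : E s' = DihedralGroup.sr 0 := by
    rw [hs'def, _root_.map_mul, _root_.map_inv, (hE1 κ).mpr hκC, inv_one, mul_one, hs]
  -- the dihedral copy inside G
  set f : ZMod n → ↥G := fun i => r' ^ i.val with hfdef
  have f_add : ∀ i j : ZMod n, f (i + j) = f i * f j := by
    intro i j
    show r' ^ (i + j).val = r' ^ i.val * r' ^ j.val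
    rw [ZMod.val_add, ← pow_eq_pow_mod _ hr'n, pow_add]
  have f_zero : f 0 = 1 := by
    show r' ^ (0 : ZMod n).val = 1
    rw [ZMod.val_zero, pow_zero]
  have f_neg : ∀ i : ZMod n, f (-i) = (f i)⁻¹ := by
    intro i
    apply eq_inv_of_mul_eq_one_left
    rw [← f_add, neg_add_cancel, f_zero]
  have f_sub : ∀ i j : ZMod n, f (j - i) = (f i)⁻¹ * f j := by
    intro i j
    have hco : Commute ((f i)⁻¹) (f j) := by
      show Commute ((r' ^ i.val)⁻¹) (r' ^ j.val)
      exact ((Commute.refl r').pow_pow _ _).inv_left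
    rw [sub_eq_add_neg, f_add, f_neg, ← hco.eq]
  have hconjf : ∀ i : ZMod n, s' * f i * s'⁻¹ = (f i)⁻¹ := by
    intro i
    show s' * r' ^ i.val * s'⁻¹ = (r' ^ i.val)⁻¹
    have hmp := map_pow (MulAut.conj s') r' i.val
    simp only [MulAut.conj_apply] at hmp
    rw [hmp, hconj, inv_pow]
  have hfs : ∀ i : ZMod n, f i * s' = s' * (f i)⁻¹ := by
    intro i
    have h := hconjf (-i)
    rw [f_neg, inv_inv] at h
    conv_lhs => rw [← h]
    group
  have hss : s' * s' = 1 := by rw [← sq]; exact hs'2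
  set φfun : DihedralGroup n → ↥G := fun d => match d with
    | DihedralGroup.r i => f i
    | DihedralGroup.sr i => s' * f i
    with hφfun
  have hφmul : ∀ a b : DihedralGroup n, φfun (a * b) = φfun a * φfun b := by
    rintro (i | i) (j | j)
    · show f (i + j) = f i * f j
      exact f_add i j
    · show s' * f (j - i) = f i * (s' * f j)
      rw [f_sub i j, ← mul_assoc (f i) s' (f j), hfs i, mul_assoc s' ((f i)⁻¹) (f j)]
    · show s' * f (i + j) = (s' * f i) * f j
      rw [f_add, mul_assoc s' (f i) (f j)]
    · show f (j - i) = (s' * f i) * (s' * f j)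
      rw [f_sub i j]
      calc (f i)⁻¹ * f j = 1 * ((f i)⁻¹ * f j) := by rw [one_mul]
        _ = (s' * s') * ((f i)⁻¹ * f j) := by rw [hss]
        _ = s' * (s' * (f i)⁻¹) * f j := by group
        _ = s' * (f i * s') * f j := by rw [← hfs i]
        _ = (s' * f i) * (s' * f j) := by group
  set φ : DihedralGroup n →* ↥G := MonoidHom.mk' φfun hφmul with hφdef
  have hEf : ∀ i : ZMod n, E (f i) = DihedralGroup.r i := by
    intro i
    show E (r' ^ i.val) = DihedralGroup.r i
    rw [map_pow, hr'E, DihedralGroup.r_one_pow]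
    congr 1
    exact ZMod.natCast_rightInverse i
  have hEφ : ∀ d : DihedralGroup n, E (φ d) = d := by
    rintro (i | i)
    · show E (f i) = DihedralGroup.r i
      exact hEf i
    · show E (s' * f i) = DihedralGroup.sr i
      rw [_root_.map_mul, hs'E, hEf i, DihedralGroup.sr_mul_r, zero_add]
  -- assembling the product decomposition
  set ι : ↥(G ⊓ Subgroup.center GL2C) →* ↥G := Subgroup.inclusion inf_le_left with hιdef
  have hιC : ∀ z : ↥(G ⊓ Subgroup.center GL2C), ((ι z : ↥G) : GL2C) ∈ Subgroup.center GL2C :=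
    fun z => (Subgroup.mem_inf.mp z.2).2
  have hcommΦ : ∀ d (z : ↥(G ⊓ Subgroup.center GL2C)), Commute (φ d) (ι z) := fun d z =>
    Commute.symm (hcomm (ι z) (φ d) (hιC z))
  set Φ : DihedralGroup n × ↥(G ⊓ Subgroup.center GL2C) →* ↥G :=
    MonoidHom.noncommCoprod φ ι hcommΦ with hΦdef
  have hΦinj : Function.Injective Φ := by
    rw [injective_iff_map_eq_one]
    rintro ⟨d, z⟩ h
    have h' : φ d * ι z = 1 := h
    have hEz : E (ι z) = 1 := (hE1 _).mpr (hιC z)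
    have hEd : d = 1 := by
      have := congrArg E h'
      rw [_root_.map_mul, hEφ d, hEz, mul_one, _root_.map_one] at this
      exact this
    have hz1 : z = 1 := by
      apply Subgroup.inclusion_injective (inf_le_left (b := Subgroup.center GL2C))
      show ι z = ι 1
      rw [_root_.map_one]
      rw [hEd, _root_.map_one, one_mul] at h'
      exact h'
    rw [hEd, hz1]
    rfl
  have hkerE : E.ker = (G ⊓ Subgroup.center GL2C).subgroupOf G := by
    ext g
    rw [MonoidHom.mem_ker, hE1 g, Subgroup.mem_subgroupOf]
    constructor
    · intro h; exact Subgroup.mem_inf.mpr ⟨g.2, h⟩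
    · intro h; exact (Subgroup.mem_inf.mp h).2
  have hcard1 : Nat.card ↥G = 2 * n * m := by
    have hq := Subgroup.card_eq_card_quotient_mul_card_subgroup E.ker
    have e2 : (↥G ⧸ E.ker) ≃* DihedralGroup n :=
      QuotientGroup.quotientKerEquivOfSurjective E hEsurj
    have e3 : ↥E.ker ≃* ↥(G ⊓ Subgroup.center GL2C) :=
      (MulEquiv.subgroupCongr hkerE).trans (Subgroup.subgroupOfEquivOfLe inf_le_left)
    rw [hq, Nat.card_congr e2.toEquiv, Nat.card_congr e3.toEquiv, DihedralGroup.nat_card,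
      hmdef]
  have hcard2 : Nat.card (DihedralGroup n × ↥(G ⊓ Subgroup.center GL2C)) = 2 * n * m := by
    rw [Nat.card_prod, DihedralGroup.nat_card, hmdef]
  have hΦbij : Function.Bijective Φ :=
    (Nat.bijective_iff_injective_and_card Φ).mpr ⟨hΦinj, by rw [hcard2, hcard1]⟩
  have eG : ↥G ≃* DihedralGroup n × ↥(G ⊓ Subgroup.center GL2C) :=
    (MulEquiv.ofBijective Φ hΦbij).symm
  -- the central part is cyclic
  haveI : IsCyclic ↥(G ⊓ Subgroup.center GL2C) := by
    apply isCyclic_of_subgroup_isDomain (R := ℂ)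
      ((Units.coeHom ℂ).comp ((Matrix.GeneralLinearGroup.det).comp
        (Subgroup.subtype (G ⊓ Subgroup.center GL2C))))
    rw [injective_iff_map_eq_one]
    intro z hz1
    have hdet : Matrix.det ((z : GL2C) : Matrix (Fin 2) (Fin 2) ℂ) = 1 := hz1
    rcases center_det17 (Subgroup.mem_inf.mp z.2).2 hdet with h | h
    · exact Subtype.ext h
    · exact absurd (h ▸ (Subgroup.mem_inf.mp z.2).1) hneg
  have hcardmul : Nat.card ↥(G ⊓ Subgroup.center GL2C)
      = Nat.card (Multiplicative (ZMod m)) := by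
    rw [← hmdef, Nat.card_congr Multiplicative.toAdd, Nat.card_zmod]
  have ζ : ↥(G ⊓ Subgroup.center GL2C) ≃* Multiplicative (ZMod m) :=
    mulEquivOfCyclicCardEq hcardmul
  exact ⟨m, hmodd, hcard1.symm, ⟨eG.trans (MulEquiv.prodCongr (MulEquiv.refl _) ζ)⟩, ⟨ζ⟩⟩
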